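/- Let W be an n×n real symmetric positive definite matrix with smallest eigenvalue α > 0, and let g ∈ ℝⁿ. If λ ∈ ℝⁿ solves the linear complementarity problem LCP(W, g), then α · ‖λ‖₂ ≤ ‖g‖₂; in particular ‖λ‖₂ ≤ ‖g‖₂ / α, so the solution is bounded. -/

import Mathlib

open Matrix BigOperators

/-- Euclidean norm on `ℝⁿ`. -/
noncomputable def euclidNorm {n : ℕ} (x : Fin n → ℝ) : ℝ :=
  Real.sqrt (∑ i, (x i) ^ 2)

lemma enorm_nonneg' {n : ℕ} (x : Fin n → ℝ) : 0 ≤ euclidNorm x :=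
  Real.sqrt_nonneg _

lemma enorm_sq {n : ℕ} (x : Fin n → ℝ) : euclidNorm x ^ 2 = ∑ i, (x i) ^ 2 := by
  rw [euclidNorm, Real.sq_sqrt]
  exact Finset.sum_nonneg fun i _ => sq_nonneg _

lemma cauchy {n : ℕ} (x y : Fin n → ℝ) : x ⬝ᵥ y ≤ euclidNorm x * euclidNorm y := by
  have h := Finset.sum_mul_sq_le_sq_mul_sq Finset.univ x y
  have h2 : (x ⬝ᵥ y) ^ 2 ≤ (euclidNorm x * euclidNorm y) ^ 2 := by
    rw [mul_pow, enorm_sq, enorm_sq]; exact h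
  have hnn : 0 ≤ euclidNorm x * euclidNorm y := mul_nonneg (enorm_nonneg' x) (enorm_nonneg' y)
  nlinarith [sq_nonneg (x ⬝ᵥ y - euclidNorm x * euclidNorm y), sq_nonneg (x ⬝ᵥ y + euclidNorm x * euclidNorm y)]

/-- For a symmetric positive definite `W` whose smallest eigenvalue `α > 0` satisfies
`λᵀWλ ≥ α‖λ‖₂²`, any solution `λ` of `LCP(W, g)` satisfies `α‖λ‖₂ ≤ ‖g‖₂`, hence
`‖λ‖₂ ≤ ‖g‖₂/α`. -/
theorem lcp_solution_bounded (n : ℕ) (W : Matrix (Fin n) (Fin n) ℝ) (hW : W.PosDef)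
    (α : ℝ) (hα : 0 < α)
    (hEig : ∀ x : Fin n → ℝ, α * euclidNorm x ^ 2 ≤ x ⬝ᵥ W.mulVec x)
    (g lam : Fin n → ℝ)
    (h1 : ∀ i, 0 ≤ lam i) (h2 : ∀ i, 0 ≤ (W.mulVec lam + g) i)
    (h3 : lam ⬝ᵥ (W.mulVec lam + g) = 0) :
    α * euclidNorm lam ≤ euclidNorm g ∧ euclidNorm lam ≤ euclidNorm g / α := by
  have hsplit : lam ⬝ᵥ W.mulVec lam + lam ⬝ᵥ g = 0 := by
    rw [← dotProduct_add]; exact h3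
  have hQ : lam ⬝ᵥ W.mulVec lam = lam ⬝ᵥ (-g) := by
    rw [dotProduct_neg]; linarith
  have hC : lam ⬝ᵥ (-g) ≤ euclidNorm lam * euclidNorm (-g) := cauchy lam (-g)
  have hng : euclidNorm (-g) = euclidNorm g := by
    simp [euclidNorm]
  have key : α * euclidNorm lam ^ 2 ≤ euclidNorm lam * euclidNorm g := by
    calc α * euclidNorm lam ^ 2 ≤ lam ⬝ᵥ W.mulVec lam := hEig lam
      _ = lam ⬝ᵥ (-g) := hQ
      _ ≤ euclidNorm lam * euclidNorm (-g) := hC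
      _ = euclidNorm lam * euclidNorm g := by rw [hng]
  have hmain : α * euclidNorm lam ≤ euclidNorm g := by
    rcases eq_or_lt_of_le (enorm_nonneg' lam) with h0 | h0
    · rw [← h0, mul_zero]; exact enorm_nonneg' g
    · have := key
      rw [sq] at this
      nlinarith
  exact ⟨hmain, by rw [le_div_iff₀ hα]; linarith [hmain, mul_comm α (euclidNorm lam)]⟩
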